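/- The function f11(p) = log p + p(1-p) - log(1 - p + p·exp(p(1-p))) is strictly increasing on the open interval (0,1). -/

import Mathlib

noncomputable def f11 (p : ℝ) : ℝ :=
  Real.log p + p * (1 - p) - Real.log (1 - p + p * Real.exp (p * (1 - p)))

noncomputable def F11aux (p : ℝ) : ℝ :=
  Real.log (1 - p) - Real.log p + (p ^ 2 - p)

lemma F11aux_strictAntiOn : StrictAntiOn F11aux (Set.Ioo (0 : ℝ) 1) := by
  apply strictAntiOn_of_deriv_neg (convex_Ioo 0 1)
  · apply ContinuousOn.add
    · apply ContinuousOn.sub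
      · apply ContinuousOn.log
        · fun_prop
        · intro x hx
          simp only [Set.mem_Ioo] at hx
          intro h; linarith [hx.2]
      · apply ContinuousOn.log continuousOn_id
        intro x hx
        simp only [Set.mem_Ioo, id] at hx ⊢
        exact ne_of_gt hx.1
    · fun_prop
  · intro x hx
    rw [interior_Ioo] at hx
    obtain ⟨h0, h1⟩ := hx
    have hx1 : (0:ℝ) < 1 - x := by linarith
    have hd : HasDerivAt F11aux (-(1 / (1 - x)) - 1 / x + (2 * x - 1)) x := by
      have d1 : HasDerivAt (fun p : ℝ => Real.log (1 - p)) (-(1 / (1 - x))) x := by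
        have hs : HasDerivAt (fun p : ℝ => (1 : ℝ) - p) (-1) x := by
          exact ((hasDerivAt_const x (1 : ℝ)).sub (hasDerivAt_id x)).congr_deriv (by norm_num)
        have := hs.log (ne_of_gt hx1)
        convert this using 1
        field_simp
      have d2 : HasDerivAt Real.log (1 / x) x := by
        simpa using Real.hasDerivAt_log (ne_of_gt h0)
      have d3 : HasDerivAt (fun p : ℝ => p ^ 2 - p) (2 * x - 1) x := by
        have := (hasDerivAt_pow 2 x).sub (hasDerivAt_id x)
        exact this.congr_deriv (by norm_num)
      exact (d1.sub d2).add d3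
    rw [hd.deriv]
    have hA : 1 < 1 / (1 - x) := by rw [lt_div_iff₀ hx1]; linarith
    have hB : 1 < 1 / x := by rw [lt_div_iff₀ h0]; linarith
    linarith

lemma f11_eq (p : ℝ) (hp : p ∈ Set.Ioo (0 : ℝ) 1) :
    f11 p = -Real.log (1 + Real.exp (F11aux p)) := by
  obtain ⟨h0, h1⟩ := hp
  set E := Real.exp (p * (1 - p)) with hE
  have hEpos : 0 < E := Real.exp_pos _
  have hg : 0 < p * E := by positivity
  have hD : 0 < 1 - p + p * E := by nlinarith
  have hexpF : Real.exp (F11aux p) = (1 - p) / (p * E) := by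
    unfold F11aux
    rw [Real.exp_add, Real.exp_sub, Real.exp_log (by linarith : (0:ℝ) < 1 - p),
      Real.exp_log h0]
    have h2 : p ^ 2 - p = -(p * (1 - p)) := by ring
    rw [h2, Real.exp_neg, ← hE]
    field_simp
  have key : 1 + Real.exp (F11aux p) = (1 - p + p * E) / (p * E) := by
    rw [hexpF]
    field_simp
    ring
  rw [key, Real.log_div (ne_of_gt hD) (ne_of_gt hg),
    Real.log_mul (ne_of_gt h0) (ne_of_gt hEpos), hE, Real.log_exp]
  unfold f11
  ring

theorem f11_strictMonoOn : StrictMonoOn f11 (Set.Ioo (0 : ℝ) 1) := by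
  intro x hx y hy hxy
  rw [f11_eq x hx, f11_eq y hy]
  have hF : F11aux y < F11aux x := F11aux_strictAntiOn hx hy hxy
  have h1 : (0:ℝ) < 1 + Real.exp (F11aux y) := by positivity
  have h2 : Real.exp (F11aux y) < Real.exp (F11aux x) := Real.exp_lt_exp.mpr hF
  have := Real.log_lt_log h1
    (by linarith : 1 + Real.exp (F11aux y) < 1 + Real.exp (F11aux x))
  linarith
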